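/- arXiv:1401.4840 — 6 statements merged into one kernel-verified Lean document; each statement's English description precedes it below -/
import Mathlib

section
/- For every well-formed deterministic three-counter machine M with m states the following holds. Let p₁ < p₂ < … < p_{m+3} be the first m+3 prime numbers and let p = p₁·p₂·⋯·p_{m+3}. Then there exist functions Q, R : Fin p → ℕ with Q i ≥ 1 and R i ≥ 1 for every i, such that for every configuration c of M, if i = e(c) mod p, then R i · e(step c) = Q i · e(c) (equivalently, e(step c) = Q i · e(c) / R i). -/
/-- A counter move: increment, decrement, or keep unchanged. -/
inductive Move : Type
  | inc : Move
  | dec : Move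
  | keep : Move

/-- Applying a move to a counter value. -/
def Move.apply : Move → ℕ → ℕ
  | Move.inc, n => n + 1
  | Move.dec, n => n - 1
  | Move.keep, n => n

/-- A deterministic three-counter machine with `m` states: a partial transition
function taking the current state and the zero-flags of the first two counters,
and returning (if defined) the new state and the moves for the first two counters
(the third counter is always incremented). -/
structure CM3 (m : ℕ) where
  δ : Fin m × Bool × Bool → Option (Fin m × Move × Move)

/-- One step of the machine on a configuration `(q, c₁, c₂, c₃)`; a halting
configuration is mapped to itself. -/
def CM3.step {m : ℕ} (M : CM3 m) (c : Fin m × ℕ × ℕ × ℕ) : Fin m × ℕ × ℕ × ℕ :=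
  match M.δ (c.1, decide (c.2.1 = 0), decide (c.2.2.1 = 0)) with
  | none => c
  | some (q', m₁, m₂) => (q', m₁.apply c.2.1, m₂.apply c.2.2.1, c.2.2.2 + 1)

/-- A machine is well-formed if it never prescribes decrementing a counter whose
zero-flag argument is true. -/
def CM3.WellFormed {m : ℕ} (M : CM3 m) : Prop :=
  ∀ q b₁ b₂ q' m₁ m₂, M.δ (q, b₁, b₂) = some (q', m₁, m₂) →
    (b₁ = true → m₁ ≠ Move.dec) ∧ (b₂ = true → m₂ ≠ Move.dec)

/-- The encoding `e(q, c₁, c₂, c₃) = p_{q+1} · p_{m+1}^{c₁} · p_{m+2}^{c₂} · p_{m+3}^{c₃}`,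
where `p_1 < p_2 < …` are the primes, i.e. `p_{j+1} = Nat.nth Nat.Prime j`. -/
noncomputable def enc (m : ℕ) (c : Fin m × ℕ × ℕ × ℕ) : ℕ :=
  Nat.nth Nat.Prime (c.1 : ℕ) * (Nat.nth Nat.Prime m) ^ c.2.1 *
    (Nat.nth Nat.Prime (m + 1)) ^ c.2.2.1 * (Nat.nth Nat.Prime (m + 2)) ^ c.2.2.2

/-- The product `p = p₁ ⋯ p_{m+3}` of the first `m + 3` primes. -/
noncomputable def primeProd (m : ℕ) : ℕ := ∏ j ∈ Finset.range (m + 3), Nat.nth Nat.Prime j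

/-- The residue `n mod p`, as an element of `Fin p` for `p = primeProd m`. -/
noncomputable def encMod (m n : ℕ) : Fin (primeProd m) :=
  ⟨n % primeProd m,
    Nat.mod_lt _ (Finset.prod_pos fun j _ => (Nat.prime_nth_prime j).pos)⟩

-- auxiliary

def mnum : Move → ℕ → ℕ
  | Move.inc, p => p
  | _, _ => 1

def mden : Move → ℕ → ℕ
  | Move.dec, p => p
  | _, _ => 1

lemma mnum_pos (mv : Move) {p : ℕ} (hp : 0 < p) : 0 < mnum mv p := by
  cases mv <;> simp [mnum] <;> omega

lemma mden_pos (mv : Move) {p : ℕ} (hp : 0 < p) : 0 < mden mv p := by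
  cases mv <;> simp [mden] <;> omega

lemma move_eq (mv : Move) (p n : ℕ) (h : mv = Move.dec → n ≠ 0) :
    mden mv p * p ^ mv.apply n = mnum mv p * p ^ n := by
  cases mv with
  | inc => simp [mnum, mden, Move.apply, pow_succ]; ring
  | keep => simp [mnum, mden, Move.apply]
  | dec =>
    obtain ⟨k, rfl⟩ := Nat.exists_eq_succ_of_ne_zero (h rfl)
    simp [mnum, mden, Move.apply, pow_succ]; ring

lemma nthp_inj : Function.Injective (Nat.nth Nat.Prime) :=
  Nat.nth_injective Nat.infinite_setOf_prime

lemma prime_dvd_prime_pow {p q b : ℕ} (hp : p.Prime) (hq : q.Prime) (h : p ∣ q ^ b) :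
    p = q ∧ 0 < b := by
  rcases Nat.eq_zero_or_pos b with rfl | hb
  · exact absurd (Nat.dvd_one.mp (by simpa using h)) hp.ne_one
  · exact ⟨(Nat.prime_dvd_prime_iff_eq hp hq).mp (hp.dvd_of_dvd_pow h), hb⟩

lemma dvd_enc (m : ℕ) (c : Fin m × ℕ × ℕ × ℕ) {j : ℕ}
    (h : Nat.nth Nat.Prime j ∣ enc m c) :
    j = (c.1 : ℕ) ∨ (j = m ∧ c.2.1 ≠ 0) ∨ (j = m + 1 ∧ c.2.2.1 ≠ 0) ∨
      (j = m + 2 ∧ c.2.2.2 ≠ 0) := by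
  have hp := Nat.prime_nth_prime j
  unfold enc at h
  rcases (hp.dvd_mul.mp h) with h | h
  · rcases (hp.dvd_mul.mp h) with h | h
    · rcases (hp.dvd_mul.mp h) with h | h
      · exact Or.inl (nthp_inj ((Nat.prime_dvd_prime_iff_eq hp (Nat.prime_nth_prime _)).mp h))
      · obtain ⟨he, hb⟩ := prime_dvd_prime_pow hp (Nat.prime_nth_prime _) h
        exact Or.inr (Or.inl ⟨nthp_inj he, by omega⟩)
    · obtain ⟨he, hb⟩ := prime_dvd_prime_pow hp (Nat.prime_nth_prime _) h
      exact Or.inr (Or.inr (Or.inl ⟨nthp_inj he, by omega⟩))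
  · obtain ⟨he, hb⟩ := prime_dvd_prime_pow hp (Nat.prime_nth_prime _) h
    exact Or.inr (Or.inr (Or.inr ⟨nthp_inj he, by omega⟩))

lemma state_dvd_enc (m : ℕ) (c : Fin m × ℕ × ℕ × ℕ) :
    Nat.nth Nat.Prime (c.1 : ℕ) ∣ enc m c := by
  unfold enc
  exact Dvd.dvd.mul_right (Dvd.dvd.mul_right (Dvd.dvd.mul_right dvd_rfl _) _) _

lemma c1_dvd_enc (m : ℕ) (c : Fin m × ℕ × ℕ × ℕ) :
    Nat.nth Nat.Prime m ∣ enc m c ↔ c.2.1 ≠ 0 := by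
  constructor
  · intro h
    rcases dvd_enc m c h with h | ⟨_, h⟩ | ⟨h, _⟩ | ⟨h, _⟩
    · exact absurd h (by have := c.1.2; omega)
    · exact h
    · omega
    · omega
  · intro h
    unfold enc
    exact Dvd.dvd.mul_right (Dvd.dvd.mul_right
      (Dvd.dvd.mul_left (dvd_pow_self _ h) _) _) _

lemma c2_dvd_enc (m : ℕ) (c : Fin m × ℕ × ℕ × ℕ) :
    Nat.nth Nat.Prime (m + 1) ∣ enc m c ↔ c.2.2.1 ≠ 0 := by
  constructor
  · intro h
    rcases dvd_enc m c h with h | ⟨h, _⟩ | ⟨_, h⟩ | ⟨h, _⟩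
    · exact absurd h (by have := c.1.2; omega)
    · omega
    · exact h
    · omega
  · intro h
    unfold enc
    exact Dvd.dvd.mul_right (Dvd.dvd.mul_left (dvd_pow_self _ h) _) _


/-- For every well-formed deterministic three-counter machine `M` with `m ≥ 1` states
there exist `Q R : Fin p → ℕ` with all values `≥ 1` such that for every configuration `c`,
if `i = e(c) mod p` then `R i · e(step c) = Q i · e(c)`. -/
theorem conway_encoding_of_CM3 (m : ℕ) (hm : 0 < m) (M : CM3 m) (hwf : M.WellFormed) :
    ∃ Q R : Fin (primeProd m) → ℕ,
      (∀ i, 1 ≤ Q i) ∧ (∀ i, 1 ≤ R i) ∧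
      ∀ c : Fin m × ℕ × ℕ × ℕ,
        R (encMod m (enc m c)) * enc m (M.step c) =
          Q (encMod m (enc m c)) * enc m c := by
  classical
  set P := Nat.nth Nat.Prime with hPdef
  have hPpos : ∀ j, 0 < P j := fun j => (Nat.prime_nth_prime j).pos
  refine ⟨fun i => if h : ∃ q : Fin m, P (q : ℕ) ∣ (i : ℕ) then
      match M.δ (h.choose, decide ¬(P m ∣ (i : ℕ)), decide ¬(P (m + 1) ∣ (i : ℕ))) with
      | none => 1
      | some (q', m₁, m₂) => P (q' : ℕ) * mnum m₁ (P m) * mnum m₂ (P (m + 1)) * P (m + 2)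
    else 1,
    fun i => if h : ∃ q : Fin m, P (q : ℕ) ∣ (i : ℕ) then
      match M.δ (h.choose, decide ¬(P m ∣ (i : ℕ)), decide ¬(P (m + 1) ∣ (i : ℕ))) with
      | none => 1
      | some (q', m₁, m₂) => P (h.choose : ℕ) * mden m₁ (P m) * mden m₂ (P (m + 1))
    else 1, ?_, ?_, ?_⟩

  · intro i
    dsimp only
    split_ifs with h
    · rcases hd : M.δ (h.choose, decide ¬(P m ∣ (i : ℕ)), decide ¬(P (m + 1) ∣ (i : ℕ)))
        with _ | ⟨q', m₁, m₂⟩ <;> simp only [hd]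
      · exact le_refl 1
      · exact mul_pos (mul_pos (mul_pos (hPpos _) (mnum_pos _ (hPpos _)))
          (mnum_pos _ (hPpos _))) (hPpos _)
    · exact le_refl 1
  · intro i
    dsimp only
    split_ifs with h
    · rcases hd : M.δ (h.choose, decide ¬(P m ∣ (i : ℕ)), decide ¬(P (m + 1) ∣ (i : ℕ)))
        with _ | ⟨q', m₁, m₂⟩ <;> simp only [hd]
      · exact le_refl 1
      · exact mul_pos (mul_pos (hPpos _) (mden_pos _ (hPpos _))) (mden_pos _ (hPpos _))
    · exact le_refl 1
  · intro c
    set i := encMod m (enc m c) with hidef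
    have hi : (i : ℕ) = enc m c % primeProd m := rfl
    have hdvdP : ∀ j, j < m + 3 → P j ∣ primeProd m := fun j hj =>
      Finset.dvd_prod_of_mem _ (Finset.mem_range.mpr hj)
    have hmod : ∀ j, j < m + 3 → (P j ∣ (i : ℕ) ↔ P j ∣ enc m c) := fun j hj => by
      rw [hi]; exact Nat.dvd_mod_iff (hdvdP j hj)
    have hex : ∃ q : Fin m, P (q : ℕ) ∣ (i : ℕ) :=
      ⟨c.1, (hmod _ (by have := c.1.2; omega)).mpr (state_dvd_enc m c)⟩
    have hq : hex.choose = c.1 := by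
      have hs := hex.choose_spec
      rw [hmod _ (by have := hex.choose.2; omega)] at hs
      rcases dvd_enc m c hs with h | ⟨h, _⟩ | ⟨h, _⟩ | ⟨h, _⟩
      · exact Fin.ext h
      all_goals (have := hex.choose.2; omega)
    have hb1 : (decide ¬(P m ∣ (i : ℕ)) : Bool) = (decide (c.2.1 = 0) : Bool) := by
      apply decide_eq_decide.mpr
      rw [hmod m (by omega)]
      rw [show (Nat.nth Nat.Prime m ∣ enc m c ↔ c.2.1 ≠ 0) from c1_dvd_enc m c |>.symm.symm]
      tauto
    have hb2 : (decide ¬(P (m + 1) ∣ (i : ℕ)) : Bool) = (decide (c.2.2.1 = 0) : Bool) := by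
      apply decide_eq_decide.mpr
      rw [hmod (m + 1) (by omega)]
      rw [show (Nat.nth Nat.Prime (m + 1) ∣ enc m c ↔ c.2.2.1 ≠ 0) from c2_dvd_enc m c |>.symm.symm]
      tauto
    simp only [dif_pos hex, hq, hb1, hb2]
    rcases hd : M.δ (c.1, decide (c.2.1 = 0), decide (c.2.2.1 = 0)) with _ | ⟨q', m₁, m₂⟩
    · simp [CM3.step, hd]
    · obtain ⟨w1, w2⟩ := hwf c.1 _ _ q' m₁ m₂ hd
      have h1 : m₁ = Move.dec → c.2.1 ≠ 0 := by
        intro hdec h0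
        exact w1 (by simp [h0]) hdec
      have h2 : m₂ = Move.dec → c.2.2.1 ≠ 0 := by
        intro hdec h0
        exact w2 (by simp [h0]) hdec
      have e1 := move_eq m₁ (P m) c.2.1 h1
      have e2 := move_eq m₂ (P (m + 1)) c.2.2.1 h2
      simp only [CM3.step, hd, enc]
      calc P (c.1 : ℕ) * mden m₁ (P m) * mden m₂ (P (m + 1)) *
            (P (q' : ℕ) * P m ^ m₁.apply c.2.1 * P (m + 1) ^ m₂.apply c.2.2.1 *
              P (m + 2) ^ (c.2.2.2 + 1))
          = (P (c.1 : ℕ) * P (q' : ℕ) * P (m + 2) ^ (c.2.2.2 + 1)) *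
              (mden m₁ (P m) * P m ^ m₁.apply c.2.1) *
              (mden m₂ (P (m + 1)) * P (m + 1) ^ m₂.apply c.2.2.1) := by ring
        _ = (P (c.1 : ℕ) * P (q' : ℕ) * P (m + 2) ^ (c.2.2.2 + 1)) *
              (mnum m₁ (P m) * P m ^ c.2.1) *
              (mnum m₂ (P (m + 1)) * P (m + 1) ^ c.2.2.1) := by rw [e1, e2]
        _ = P (q' : ℕ) * mnum m₁ (P m) * mnum m₂ (P (m + 1)) * P (m + 2) *
              (P (c.1 : ℕ) * P m ^ c.2.1 * P (m + 1) ^ c.2.2.1 * P (m + 2) ^ c.2.2.2) := by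
            rw [pow_succ]; ring
end

section
/- With the truncated-path relations T, R, G and the set 𝒢 as defined (parameters p ≥ 1, k₀ ∈ ℕ, q, r : Fin p → ℕ with all values ≥ 1): if every element of 𝒢 is strictly smaller than k₀, then for all j ∈ ℕ, G j holds if and only if j ∈ 𝒢. -/
/-- The relations `T i` on the truncated path: `T i 0 0`, and if `T i y z` then
`T i (min (y + q i) k₀) (min (z + r i) k₀)`. -/
inductive TRel (p k₀ : ℕ) (q r : Fin p → ℕ) : Fin p → ℕ → ℕ → Prop
  | zero (i : Fin p) : TRel p k₀ q r i 0 0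
  | step {i : Fin p} {y z : ℕ} : TRel p k₀ q r i y z →
      TRel p k₀ q r i (min (y + q i) k₀) (min (z + r i) k₀)

/-- The counting-modulo-`p` relation on the truncated path: `R 0 0`, and if `R i y`
then `R (i + 1) (min (y + 1) k₀)`, with cyclic addition in `Fin p`. -/
inductive RRel (p : ℕ) [NeZero p] (k₀ : ℕ) : Fin p → ℕ → Prop
  | zero : RRel p k₀ 0 0
  | step {i : Fin p} {y : ℕ} : RRel p k₀ i y → RRel p k₀ (i + 1) (min (y + 1) k₀)

/-- The pebble predicate `G` on the truncated path: `G (min 2 k₀)`, and if `R i y`,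
`G y` and `T i y z` then `G z`. -/
inductive GRel (p : ℕ) [NeZero p] (k₀ : ℕ) (q r : Fin p → ℕ) : ℕ → Prop
  | base : GRel p k₀ q r (min 2 k₀)
  | step {i : Fin p} {y z : ℕ} : RRel p k₀ i y → GRel p k₀ q r y →
      TRel p k₀ q r i y z → GRel p k₀ q r z

/-- The least subset `𝒢` of `ℕ` containing `2` and closed under the rule: if `n ∈ 𝒢`,
`(i : ℕ) = n mod p` and `n = k · q i`, then `k · r i ∈ 𝒢`. -/
inductive GSetP (p : ℕ) (q r : Fin p → ℕ) : ℕ → Prop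
  | base : GSetP p q r 2
  | step {n k : ℕ} {i : Fin p} : GSetP p q r n → (i : ℕ) = n % p →
      n = k * q i → GSetP p q r (k * r i)

open Fin.NatCast

lemma RRel_exists {p k₀ : ℕ} [NeZero p] {i : Fin p} {y : ℕ} (h : RRel p k₀ i y) :
    ∃ m : ℕ, i = (m : Fin p) ∧ y = min m k₀ := by
  induction h with
  | zero => exact ⟨0, by simp, by simp⟩
  | step h ih =>
    obtain ⟨m, hi, hy⟩ := ih
    exact ⟨m + 1, by simp [hi], by omega⟩

lemma TRel_exists {p k₀ : ℕ} {q r : Fin p → ℕ} {i : Fin p} {y z : ℕ}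
    (h : TRel p k₀ q r i y z) :
    ∃ m : ℕ, y = min (m * q i) k₀ ∧ z = min (m * r i) k₀ := by
  induction h with
  | zero => exact ⟨0, by simp, by simp⟩
  | @step y z h ih =>
    obtain ⟨m, hy, hz⟩ := ih
    refine ⟨m + 1, ?_, ?_⟩
    · have : (m + 1) * q i = m * q i + q i := by ring
      omega
    · have : (m + 1) * r i = m * r i + r i := by ring
      omega

lemma RRel_of (p : ℕ) [NeZero p] (k₀ m : ℕ) : RRel p k₀ (m : Fin p) (min m k₀) := by
  induction m with
  | zero => simpa using RRel.zero
  | succ m ih =>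
    have h1 : ((m + 1 : ℕ) : Fin p) = (m : Fin p) + 1 := by push_cast; ring
    have h2 : min (m + 1) k₀ = min (min m k₀ + 1) k₀ := by omega
    rw [h1, h2]; exact ih.step

lemma TRel_of (p k₀ : ℕ) (q r : Fin p → ℕ) (i : Fin p) (m : ℕ) :
    TRel p k₀ q r i (min (m * q i) k₀) (min (m * r i) k₀) := by
  induction m with
  | zero => simpa using TRel.zero i
  | succ m ih =>
    have h1 : min ((m + 1) * q i) k₀ = min (min (m * q i) k₀ + q i) k₀ := by
      have : (m + 1) * q i = m * q i + q i := by ring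
      omega
    have h2 : min ((m + 1) * r i) k₀ = min (min (m * r i) k₀ + r i) k₀ := by
      have : (m + 1) * r i = m * r i + r i := by ring
      omega
    rw [h1, h2]; exact ih.step

/-- If every element of `𝒢` is strictly smaller than `k₀`, then for all `j`,
`G j` holds if and only if `j ∈ 𝒢`. -/
theorem GRel_iff_GSetP (p k₀ : ℕ) [NeZero p] (q r : Fin p → ℕ)
    (hq : ∀ i, 1 ≤ q i) (hr : ∀ i, 1 ≤ r i)
    (hbound : ∀ n, GSetP p q r n → n < k₀) :
    ∀ j : ℕ, GRel p k₀ q r j ↔ GSetP p q r j := by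
  have h2 : 2 < k₀ := hbound 2 GSetP.base
  intro j
  constructor
  · intro h
    induction h with
    | base =>
      have : min 2 k₀ = 2 := by omega
      rw [this]; exact GSetP.base
    | @step i y z hR hG hT ih =>
      obtain ⟨m, him, hy⟩ := RRel_exists hR
      obtain ⟨m', hy', hz⟩ := TRel_exists hT
      have hyk : y < k₀ := hbound y ih
      have hym : y = m := by omega
      have hi : (i : ℕ) = y % p := by
        subst hym; subst him; simp [Fin.val_natCast]
      have hyq : y = m' * q i := by omega
      have hmem : GSetP p q r (m' * r i) := GSetP.step ih hi hyq
      have hzz : z = m' * r i := by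
        have := hbound _ hmem; omega
      rw [hzz]; exact hmem
  · intro h
    induction h with
    | base =>
      have : (2 : ℕ) = min 2 k₀ := by omega
      rw [this]; exact GRel.base
    | @step n k i hn hi hk ih =>
      have hnk : n < k₀ := hbound n hn
      have hkr : k * r i < k₀ := hbound _ (GSetP.step hn hi hk)
      have hR : RRel p k₀ i n := by
        have h := RRel_of p k₀ n
        have hcast : ((n : ℕ) : Fin p) = i := by
          rw [Fin.ext_iff, Fin.val_natCast, ← hi]
        rw [hcast, Nat.min_eq_left hnk.le] at h; exact h
      have hT : TRel p k₀ q r i n (k * r i) := by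
        have h := TRel_of p k₀ q r i k
        rw [← hk, Nat.min_eq_left hnk.le, Nat.min_eq_left hkr.le] at h
        exact h
      exact GRel.step hR ih hT
end

section
/- With the path-of-length-N relation T as defined: for all i, j ∈ ℕ, T i j holds if and only if i ≤ j, i < 2j, and 2j ≤ N + i (i.e. 1 ≤ 2j − i ≤ N and i ≤ j). -/
/-- The relation `T` on the path `a₀, …, a_N`: `T j j` for `1 ≤ j ≤ N`, and if
`T i j` with `i ≥ 2` and `j ≥ 1` then `T (i - 2) (j - 1)`. -/
inductive Tpath (N : ℕ) : ℕ → ℕ → Prop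
  | diag {j : ℕ} : 1 ≤ j → j ≤ N → Tpath N j j
  | step {i j : ℕ} : Tpath N i j → 2 ≤ i → 1 ≤ j → Tpath N (i - 2) (j - 1)

lemma Tpath_of (N : ℕ) : ∀ d i j, j - i = d →
    i ≤ j → i < 2 * j → 2 * j ≤ N + i → Tpath N i j := by
  intro d
  induction d with
  | zero =>
    intro i j hd h1 h2 h3
    have : i = j := by omega
    subst this
    exact Tpath.diag (by omega) (by omega)
  | succ m ih =>
    intro i j hd h1 h2 h3
    have h : Tpath N (i + 2) (j + 1) := ih (i + 2) (j + 1) (by omega) (by omega) (by omega) (by omega)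
    have := Tpath.step h (by omega) (by omega)
    simpa using this

/-- `T i j` holds if and only if `i ≤ j`, `i < 2j`, and `2j ≤ N + i`. -/
theorem Tpath_iff (N : ℕ) (i j : ℕ) :
    Tpath N i j ↔ i ≤ j ∧ i < 2 * j ∧ 2 * j ≤ N + i := by
  constructor
  · intro h
    induction h with
    | diag h1 h2 => omega
    | step h h1 h2 ih => omega
  · rintro ⟨h1, h2, h3⟩
    exact Tpath_of N (j - i) i j rfl h1 h2 h3
end

section
/- With the path-of-length-N relations T, C, K as defined (parameters N, m ∈ ℕ): for every j ≥ 1, K j holds if and only if (j − 1) · 2^m ≤ N · (2^m − 1) (i.e. (j − 1)/N ≤ (2^m − 1)/2^m). -/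
/-- The relation `C` (first argument: level, second: position): `C l 0` for every
`l ≤ m`, and if `T i j`, `C l i` and `l < m`, then `C (l + 1) j`. -/
inductive Cpath (N m : ℕ) : ℕ → ℕ → Prop
  | base {l : ℕ} : l ≤ m → Cpath N m l 0
  | step {i j l : ℕ} : Tpath N i j → Cpath N m l i → l < m → Cpath N m (l + 1) j

/-- The predicate `K`: `K 0`, and if `C m j` then `K (j + 1)`. -/
inductive Kpath (N m : ℕ) : ℕ → Prop
  | zero : Kpath N m 0
  | step {j : ℕ} : Cpath N m m j → Kpath N m (j + 1)

lemma T_of (N k : ℕ) : ∀ i, 1 ≤ i + k → i + k + k ≤ N → Tpath N i (i + k) := by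
  induction k with
  | zero => intro i h1 h2; simpa using Tpath.diag h1 (by omega)
  | succ k ih =>
    intro i h1 h2
    have h := ih (i + 2) (by omega) (by omega)
    have h' := Tpath.step h (by omega) (by omega)
    have e1 : i + 2 - 2 = i := by omega
    have e2 : i + 2 + k - 1 = i + (k + 1) := by omega
    rwa [e1, e2] at h'

lemma T_iff (N i j : ℕ) : Tpath N i j ↔ 1 ≤ j ∧ i ≤ j ∧ j + (j - i) ≤ N := by
  constructor
  · intro h
    induction h with
    | diag h1 h2 => omega
    | step h h2 h1 ih => omega
  · rintro ⟨h1, h2, h3⟩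
    have e : j = i + (j - i) := by omega
    rw [e]
    exact T_of N (j - i) i (by omega) (by omega)

lemma C_iff (N m l j : ℕ) : Cpath N m l j ↔ l ≤ m ∧ j * 2 ^ l ≤ N * (2 ^ l - 1) := by
  constructor
  · intro h
    induction h with
    | base h => simpa using h
    | @step i j l hT hC hlm ih =>
      obtain ⟨_, hiq⟩ := ih
      rw [T_iff] at hT
      obtain ⟨h1, h2, h3⟩ := hT
      refine ⟨by omega, ?_⟩
      have hq : 1 ≤ 2 ^ l := Nat.one_le_two_pow
      have h2j : 2 * j ≤ N + i := by omega
      calc j * 2 ^ (l + 1) = 2 * j * 2 ^ l := by ring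
        _ ≤ (N + i) * 2 ^ l := Nat.mul_le_mul_right _ h2j
        _ = N * 2 ^ l + i * 2 ^ l := by ring
        _ ≤ N * 2 ^ l + N * (2 ^ l - 1) := by omega
        _ = N * (2 ^ l + (2 ^ l - 1)) := by ring
        _ = N * (2 ^ (l + 1) - 1) := by
            congr 1
            have : 2 ^ (l + 1) = 2 ^ l + 2 ^ l := by ring
            omega
  · rintro ⟨hlm, hle⟩
    induction l generalizing j with
    | zero => simp at hle; subst hle; exact Cpath.base hlm
    | succ l ih =>
      rcases Nat.eq_zero_or_pos j with rfl | hj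
      · exact Cpath.base hlm
      · have hq : 1 ≤ 2 ^ l := Nat.one_le_two_pow
        have hle' : j * 2 ^ l + j * 2 ^ l ≤ N * 2 ^ l + N * 2 ^ l - N := by
          have e1 : j * 2 ^ (l + 1) = j * 2 ^ l + j * 2 ^ l := by ring
          have e2 : N * (2 ^ (l + 1) - 1) = N * 2 ^ (l + 1) - N * 1 := Nat.mul_sub ..
          have e3 : N * 2 ^ (l + 1) = N * 2 ^ l + N * 2 ^ l := by ring
          omega
        have hjN : j < N := by
          have hg : 1 * 1 ≤ j * 2 ^ l := Nat.mul_le_mul hj Nat.one_le_two_pow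
          rcases Nat.eq_zero_or_pos N with rfl | hN
          · simp at hle'; omega
          have : j * 2 ^ l < N * 2 ^ l := by omega
          exact Nat.lt_of_mul_lt_mul_right this
        have hCi : Cpath N m l (2 * j - N) := by
          apply ih _ (by omega)
          have e4 : (2 * j - N) * 2 ^ l = 2 * j * 2 ^ l - N * 2 ^ l := Nat.sub_mul ..
          have e5 : 2 * j * 2 ^ l = j * 2 ^ l + j * 2 ^ l := by ring
          have e6 : N * (2 ^ l - 1) = N * 2 ^ l - N * 1 := Nat.mul_sub ..
          omega
        have hT : Tpath N (2 * j - N) j := by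
          rw [T_iff]
          exact ⟨hj, by omega, by omega⟩
        exact Cpath.step hT hCi (by omega)

/-- For `j ≥ 1`: `K j` holds if and only if `(j − 1) · 2^m ≤ N · (2^m − 1)`. -/
theorem Kpath_iff (N m : ℕ) (j : ℕ) (hj : 1 ≤ j) :
    Kpath N m j ↔ (j - 1) * 2 ^ m ≤ N * (2 ^ m - 1) := by
  constructor
  · intro h
    cases h with
    | zero => omega
    | step hC => simpa using (C_iff N m m _).mp hC |>.2
  · intro h
    obtain ⟨j', rfl⟩ : ∃ j', j = j' + 1 := ⟨j - 1, by omega⟩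
    exact Kpath.step ((C_iff N m m j').mpr ⟨le_refl m, by simpa using h⟩)
end

section
/- With the path-of-length-N relations T, C, K as defined (parameters N, m ∈ ℕ): K N holds if and only if N ≤ 2^m. (Consequently, in the oblivious chase of 𝒯⁰_b(m) the existential rule K(x) ⇒ ∃y R(x,y) is triggered at the last element of the current path of length N exactly when N ≤ 2^m, so the chase builds a path of length exactly 2^m + 1 and terminates.) -/
/-- `cl N l = ⌈N / 2^l⌉`, defined by iterated halving. -/
private def cl (N : ℕ) : ℕ → ℕ
  | 0 => N
  | l + 1 => (cl N l + 1) / 2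

private lemma cl_le (N l : ℕ) : cl N l ≤ N := by
  induction l with
  | zero => simp [cl]
  | succ l ih => simp only [cl]; omega

private lemma cl_le_iff (N l : ℕ) : ∀ k, cl N l ≤ k ↔ N ≤ k * 2 ^ l := by
  induction l with
  | zero => intro k; simp [cl]
  | succ l ih =>
    intro k
    have h := ih (2 * k)
    simp only [cl]
    constructor
    · intro h2
      have : cl N l ≤ 2 * k := by omega
      calc N ≤ 2 * k * 2 ^ l := h.1 this
        _ = k * 2 ^ (l + 1) := by ring
    · intro h2
      have h3 : N ≤ 2 * k * 2 ^ l := by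
        rw [pow_succ] at h2; nlinarith
      have := h.2 h3
      omega

private lemma T_forward {N i j : ℕ} (h : Tpath N i j) :
    i ≤ j ∧ i + 1 ≤ 2 * j ∧ 2 * j ≤ N + i := by
  induction h with
  | diag h1 h2 => omega
  | step h h2 h1 ih => omega

private lemma T_backward {N : ℕ} (d : ℕ) : ∀ i j, j - i ≤ d → i ≤ j →
    i + 1 ≤ 2 * j → 2 * j ≤ N + i → Tpath N i j := by
  induction d with
  | zero =>
    intro i j h1 h2 h3 h4
    have hij : i = j := by omega
    subst hij
    exact Tpath.diag (by omega) (by omega)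
  | succ d ih =>
    intro i j h1 h2 h3 h4
    by_cases hij : i = j
    · subst hij; exact Tpath.diag (by omega) (by omega)
    · have h := Tpath.step
        (ih (i + 2) (j + 1) (by omega) (by omega) (by omega) (by omega))
        (by omega) (by omega)
      simpa using h

private lemma C_forward {N m l j : ℕ} (h : Cpath N m l j) :
    l ≤ m ∧ (j = 0 ∨ (1 ≤ j ∧ j + cl N l ≤ N)) := by
  induction h with
  | base hl => exact ⟨hl, Or.inl rfl⟩
  | @step i j l hT hC hlm ih =>
    obtain ⟨hT1, hT2, hT3⟩ := T_forward hT
    have hcl : cl N l ≤ N := cl_le N l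
    have hdef : cl N (l + 1) = (cl N l + 1) / 2 := rfl
    omega

private lemma C_backward {N m : ℕ} : ∀ l j, l ≤ m →
    (j = 0 ∨ (1 ≤ j ∧ j + cl N l ≤ N)) → Cpath N m l j := by
  intro l
  induction l with
  | zero =>
    intro j hl hj
    have hj0 : j = 0 := by simp only [cl] at hj; omega
    subst hj0
    exact Cpath.base hl
  | succ l ih =>
    intro j hl hj
    rcases hj with hj | ⟨hj1, hj2⟩
    · subst hj; exact Cpath.base hl
    · have hcl : cl N l ≤ N := cl_le N l
      have hdef : cl N (l + 1) = (cl N l + 1) / 2 := rfl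
      by_cases hN : 2 * j ≤ N
      · exact Cpath.step (T_backward j 0 j (by omega) (by omega) (by omega) (by omega))
          (ih 0 (by omega) (Or.inl rfl)) (by omega)
      · exact Cpath.step
          (T_backward j (2 * j - N) j (by omega) (by omega) (by omega) (by omega))
          (ih (2 * j - N) (by omega) (Or.inr ⟨by omega, by omega⟩)) (by omega)

/-- `K N` holds if and only if `N ≤ 2^m`. -/
theorem Kpath_last_iff (N m : ℕ) :
    Kpath N m N ↔ N ≤ 2 ^ m := by
  constructor
  · intro h
    cases h with
    | zero => exact Nat.zero_le _
    | @step j hC =>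
      obtain ⟨-, hj⟩ := C_forward hC
      rcases hj with hj | ⟨hj1, hj2⟩
      · subst hj
        simpa using Nat.one_le_two_pow
      · have := (cl_le_iff (j + 1) m 1).1 (by omega)
        omega
  · intro h
    cases N with
    | zero => exact Kpath.zero
    | succ n =>
      have hcl : cl (n + 1) m ≤ 1 := (cl_le_iff (n + 1) m 1).2 (by omega)
      rcases Nat.eq_zero_or_pos n with hn | hn
      · subst hn
        exact Kpath.step (C_backward m 0 le_rfl (Or.inl rfl))
      · exact Kpath.step (C_backward m n le_rfl (Or.inr ⟨by omega, by omega⟩))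
end

section
/- For every type V and every relation E : V → V → Prop, define a relation E' on V ⊕ V by: E' (inl x) (inl y) ↔ E x y; E' (inl y) (inr y') ↔ (y = y' ∧ ∃ x, E x y); E' (inr y) (inl y') ↔ (y = y' ∧ ∃ x, E x y); and E' (inr y) (inr y') is always false. Then E' satisfies the tuple generating dependency E(x,y) ⇒ ∃z (E(y,z) ∧ E(z,y)): for all a, b in V ⊕ V, if E' a b then there exists c with E' b c and E' c b. -/
/-- The structure obtained from the instance `(V, E)` after one parallel chase round
with the TGD `E(x,y) ⇒ ∃z (E(y,z) ∧ E(z,y))`: on `V ⊕ V`, left–left edges are the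
`E`-edges, a right copy `inr y` is connected to and from `inl y` whenever `y` has an
`E`-predecessor, and there are no right–right edges. -/
def chaseRel {V : Type*} (E : V → V → Prop) : V ⊕ V → V ⊕ V → Prop
  | Sum.inl x, Sum.inl y => E x y
  | Sum.inl y, Sum.inr y' => y = y' ∧ ∃ x, E x y
  | Sum.inr y, Sum.inl y' => y = y' ∧ ∃ x, E x y
  | Sum.inr _, Sum.inr _ => False

/-- The relation `E'` satisfies the TGD `E(x,y) ⇒ ∃z (E(y,z) ∧ E(z,y))`. -/
theorem chaseRel_satisfies_tgd {V : Type*} (E : V → V → Prop) :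
    ∀ a b : V ⊕ V, chaseRel E a b → ∃ c : V ⊕ V, chaseRel E b c ∧ chaseRel E c b := by
  rintro (a|a) (b|b) h
  · exact ⟨Sum.inr b, ⟨rfl, a, h⟩, ⟨rfl, a, h⟩⟩
  · obtain ⟨rfl, hx⟩ := h
    exact ⟨Sum.inl a, ⟨rfl, hx⟩, ⟨rfl, hx⟩⟩
  · obtain ⟨rfl, hx⟩ := h
    exact ⟨Sum.inr a, ⟨rfl, hx⟩, ⟨rfl, hx⟩⟩
  · exact h.elim
end
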